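/- Let E/F be a finite extension of fields and let e ≥ 1 be an integer such that F contains a primitive e-th root of unity and gcd([E:F], e) = 1. Then for every y ∈ E^* that is an e-th power in E^*, the norm map N_{E/F} induces a bijection from the set {x ∈ E : x^e = y} of roots of X^e − y in E onto the set {z ∈ F : z^e = N_{E/F}(y)} of roots of X^e − N_{E/F}(y) in F. -/

import Mathlib

theorem norm_bijection_on_roots
    (F E : Type*) [Field F] [Field E] [Algebra F E] [FiniteDimensional F E]
    (e : ℕ) (he : 1 ≤ e) (hζ : ∃ ζ : F, IsPrimitiveRoot ζ e)
    (hgcd : Nat.gcd (Module.finrank F E) e = 1)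
    (y : E) (hy : y ≠ 0) (hpow : ∃ x : E, x ^ e = y) :
    Set.BijOn (Algebra.norm F) {x : E | x ^ e = y}
      {z : F | z ^ e = Algebra.norm F y} := by
  obtain ⟨ζ, hζ⟩ := hζ
  obtain ⟨x0, hx0⟩ := hpow
  set n := Module.finrank F E with hn
  have he0 : 0 < e := he
  have hne : NeZero e := ⟨he0.ne'⟩
  have hinj : Function.Injective (algebraMap F E) := (algebraMap F E).injective
  have hζE : IsPrimitiveRoot (algebraMap F E ζ) e := hζ.map_of_injective hinj
  have hx0ne : x0 ≠ 0 := by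
    intro h; apply hy; rw [← hx0, h, zero_pow he0.ne']
  have hnormx0 : (Algebra.norm F x0) ^ e = Algebra.norm F y := by
    rw [← map_pow, hx0]
  have hnx0ne : Algebra.norm F x0 ≠ 0 := by
    rw [Algebra.norm_ne_zero_iff]; exact hx0ne
  refine ⟨?_, ?_, ?_⟩
  · intro x hx
    simp only [Set.mem_setOf_eq] at hx ⊢
    rw [← map_pow, hx]
  · intro x1 h1 x2 h2 hN
    simp only [Set.mem_setOf_eq] at h1 h2
    have hx2ne : x2 ≠ 0 := by
      intro h; apply hy; rw [← h2, h, zero_pow he0.ne']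
    have hw : (x1 / x2) ^ e = 1 := by
      rw [div_pow, h1, h2, div_self hy]
    obtain ⟨i, hi, hiw⟩ := hζE.eq_pow_of_pow_eq_one hw
    have hx1 : x1 = x2 * algebraMap F E (ζ ^ i) := by
      rw [map_pow, hiw]
      field_simp
    have hNx2ne : Algebra.norm F x2 ≠ 0 := by
      rw [Algebra.norm_ne_zero_iff]; exact hx2ne
    have hNeq : Algebra.norm F x2 * (ζ ^ i) ^ n = Algebra.norm F x2 := by
      rw [← Algebra.norm_algebraMap (R := F) (S := E) (ζ ^ i), ← map_mul, ← hx1, hN]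
    have hζin : ζ ^ (i * n) = 1 := by
      rw [pow_mul]
      exact mul_left_cancel₀ hNx2ne (hNeq.trans (mul_one _).symm)
    have hdvd : e ∣ i * n := hζ.dvd_of_pow_eq_one _ hζin
    have hcop : Nat.Coprime e n := (Nat.coprime_comm.mp hgcd)
    have : e ∣ i := hcop.dvd_of_dvd_mul_right hdvd
    have hi0 : i = 0 := Nat.eq_zero_of_dvd_of_lt this hi
    rw [hx1, hi0, pow_zero, map_one, mul_one]
  · intro z hz
    simp only [Set.mem_setOf_eq] at hz
    have hw : (z / Algebra.norm F x0) ^ e = 1 := by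
      rw [div_pow, hz, hnormx0, div_self]
      rw [← hnormx0]
      exact pow_ne_zero _ hnx0ne
    obtain ⟨j, hj, hjw⟩ := hζ.eq_pow_of_pow_eq_one hw
    have hz' : z = Algebra.norm F x0 * ζ ^ j := by
      rw [hjw]; field_simp
    -- find i with n * i ≡ j [MOD e]
    have hcop : Nat.Coprime n e := hgcd
    set u : (ZMod e)ˣ := ZMod.unitOfCoprime n hcop with hu
    set i : ℕ := (((u⁻¹ : (ZMod e)ˣ) : ZMod e) * (j : ZMod e)).val with hidef
    have hmod : n * i ≡ j [MOD e] := by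
      have : ((n * i : ℕ) : ZMod e) = (j : ZMod e) := by
        push_cast [hidef]
        rw [ZMod.natCast_val, ZMod.cast_id]
        have hun : ((u : (ZMod e)ˣ) : ZMod e) = (n : ZMod e) := rfl
        calc (n : ZMod e) * (((u⁻¹ : (ZMod e)ˣ) : ZMod e) * (j : ZMod e))
            = (((u : (ZMod e)ˣ) : ZMod e) * ((u⁻¹ : (ZMod e)ˣ) : ZMod e)) * (j : ZMod e) := by
              rw [hun]; ring
          _ = (j : ZMod e) := by
              rw [← Units.val_mul, mul_inv_cancel, Units.val_one, one_mul]
      exact (ZMod.natCast_eq_natCast_iff _ _ _).mp this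
    refine ⟨x0 * algebraMap F E (ζ ^ i), ?_, ?_⟩
    · simp only [Set.mem_setOf_eq]
      rw [mul_pow, ← map_pow, ← pow_mul, mul_comm i e, pow_mul, hζ.pow_eq_one, one_pow,
        map_one, mul_one, hx0]
    · have key : ∀ a : ℕ, ζ ^ a = ζ ^ (a % e) := fun a => by
        conv_lhs => rw [← Nat.div_add_mod a e]
        rw [pow_add, pow_mul, hζ.pow_eq_one, one_pow, one_mul]
      rw [map_mul, Algebra.norm_algebraMap, hz', ← pow_mul]
      congr 1
      rw [mul_comm i n, key (n * i), key j]
      exact congrArg (fun t => ζ ^ t) hmod
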